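/- In the Klein bottle group K = ⟨a, b | b⁻¹ab = a⁻¹⟩, every element of the coset a^{2k}⟨b⁴⟩ (k ∈ ℤ) has a unique square root in K, and that square root lies in a^k⟨b²⟩. -/

import Mathlib

open scoped Pointwise

/-- The single relator `b⁻¹ * a * b * a` of the Klein bottle group
`K = ⟨a, b ∣ b⁻¹ a b = a⁻¹⟩`, with generator `0 = a`, `1 = b`. -/
def KleinRels : Set (FreeGroup (Fin 2)) :=
  {(FreeGroup.of 1)⁻¹ * FreeGroup.of 0 * FreeGroup.of 1 * FreeGroup.of 0}

/-- The Klein bottle group. -/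
abbrev KleinGroup := PresentedGroup KleinRels

def aK : KleinGroup := PresentedGroup.of 0
def bK : KleinGroup := PresentedGroup.of 1

namespace KleinSolve

open Multiplicative SemidirectProduct

def invAut : MulAut (Multiplicative ℤ) := MulEquiv.inv (Multiplicative ℤ)

lemma invAut_sq : (invAut : MulAut (Multiplicative ℤ)) ^ (2 : ℤ) = 1 := by
  rw [zpow_two]
  ext x
  simp [invAut]

def φK : Multiplicative ℤ →* MulAut (Multiplicative ℤ) := zpowersHom _ invAut

lemma φK_apply (i : ℤ) : φK (ofAdd i) = invAut ^ i := rfl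

lemma φK_even {i : ℤ} (h : Even i) (n : Multiplicative ℤ) :
    φK (ofAdd i) n = n := by
  obtain ⟨c, rfl⟩ := h
  have h1 : invAut ^ (c + c) = 1 := by
    calc invAut ^ (c + c) = (invAut ^ (2:ℤ)) ^ c := by rw [← zpow_mul]; ring_nf
    _ = 1 := by rw [invAut_sq, one_zpow]
  rw [φK_apply, h1, MulAut.one_apply]

lemma φK_odd {i : ℤ} (h : Odd i) (n : Multiplicative ℤ) :
    φK (ofAdd i) n = n⁻¹ := by
  obtain ⟨c, rfl⟩ := h
  have h1 : invAut ^ (2 * c + 1) = invAut := by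
    rw [zpow_add, zpow_mul, invAut_sq, one_zpow, one_mul, zpow_one]
  rw [φK_apply, h1]
  rfl

abbrev M := Multiplicative ℤ ⋊[φK] Multiplicative ℤ

def A : M := inl (ofAdd 1)
def B : M := inr (ofAdd 1)

lemma A_zpow (j : ℤ) : A ^ j = inl (ofAdd j) := by
  rw [A, ← map_zpow]
  congr 1
  rw [← ofAdd_zsmul]
  norm_num

lemma B_zpow (j : ℤ) : B ^ j = inr (ofAdd j) := by
  rw [B, ← map_zpow]
  congr 1
  rw [← ofAdd_zsmul]
  norm_num

lemma relM : B⁻¹ * A * B * A = 1 := by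
  have h : B⁻¹ * A * B = A⁻¹ := by
    have h0 : (B : M)⁻¹ = inr ((ofAdd 1)⁻¹) := by rw [B, map_inv]
    have h1 : (inl (φK ((ofAdd 1)⁻¹) (ofAdd 1)) : M)
        = inr ((ofAdd 1)⁻¹) * inl (ofAdd 1) * inr ((ofAdd 1)⁻¹)⁻¹ := inl_aut _ _
    have h2 : φK ((ofAdd (1:ℤ))⁻¹) (ofAdd 1) = (ofAdd (1:ℤ))⁻¹ := by
      rw [show ((ofAdd (1:ℤ))⁻¹ : Multiplicative ℤ) = ofAdd (-1) from rfl]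
      exact φK_odd ⟨-1, by ring⟩ _
    rw [h0, B, A, inv_inv] at *
    rw [← h1, h2, map_inv]
  rw [h, inv_mul_cancel]

def fGen : Fin 2 → M := ![A, B]

lemma relsOK : ∀ r ∈ KleinRels, FreeGroup.lift fGen r = 1 := by
  intro r hr
  simp only [KleinRels, Set.mem_singleton_iff] at hr
  subst hr
  simp only [map_mul, map_inv, FreeGroup.lift_apply_of, fGen]
  simpa using relM

def toM : KleinGroup →* M := PresentedGroup.toGroup relsOK

lemma toM_a : toM aK = A := PresentedGroup.toGroup.of relsOK
lemma toM_b : toM bK = B := PresentedGroup.toGroup.of relsOK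

lemma relK : bK⁻¹ * aK * bK * aK = 1 := by
  have hmem : ((FreeGroup.of 1)⁻¹ * FreeGroup.of 0 * FreeGroup.of 1 * FreeGroup.of 0 :
      FreeGroup (Fin 2)) ∈ Subgroup.normalClosure KleinRels :=
    Subgroup.subset_normalClosure rfl
  have h := (PresentedGroup.mk_eq_one_iff (rels := KleinRels)).2 hmem
  simpa [aK, bK, PresentedGroup.of, map_mul] using h

lemma conj_b : bK * aK * bK⁻¹ = aK⁻¹ := by
  have h1 : bK⁻¹ * aK * bK = aK⁻¹ := by
    have := relK
    calc bK⁻¹ * aK * bK = bK⁻¹ * aK * bK * aK * aK⁻¹ := by group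
    _ = 1 * aK⁻¹ := by rw [this]
    _ = aK⁻¹ := one_mul _
  have h2 : bK * aK⁻¹ * bK⁻¹ = aK := by
    rw [← h1]; group
  calc bK * aK * bK⁻¹ = (bK * aK⁻¹ * bK⁻¹)⁻¹ := by group
  _ = aK⁻¹ := by rw [h2]

lemma comm2 : Commute (bK ^ (2:ℤ)) aK := by
  have h := conj_b
  have key : bK ^ (2:ℤ) * aK * (bK ^ (2:ℤ))⁻¹ = aK := by
    rw [zpow_two]
    calc bK * bK * aK * (bK * bK)⁻¹ = bK * (bK * aK * bK⁻¹) * bK⁻¹ := by group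
    _ = bK * aK⁻¹ * bK⁻¹ := by rw [h]
    _ = (bK * aK * bK⁻¹)⁻¹ := by group
    _ = aK := by rw [h]; group
  unfold Commute SemiconjBy
  calc bK ^ (2:ℤ) * aK = (bK ^ (2:ℤ) * aK * (bK ^ (2:ℤ))⁻¹) * bK ^ (2:ℤ) := by group
  _ = aK * bK ^ (2:ℤ) := by rw [key]

lemma conj_even (c : ℤ) : bK ^ (2*c) * aK * (bK ^ (2*c))⁻¹ = aK := by
  have h : Commute (bK ^ (2*c)) aK := by
    rw [zpow_mul]
    exact comm2.zpow_left c
  rw [h.eq]; group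

lemma conj_odd (c : ℤ) : bK ^ (2*c+1) * aK * (bK ^ (2*c+1))⁻¹ = aK⁻¹ := by
  have h : bK ^ (2*c+1) = bK ^ (2*c) * bK := by rw [zpow_add, zpow_one]
  rw [h]
  calc bK ^ (2*c) * bK * aK * (bK ^ (2*c) * bK)⁻¹
      = bK ^ (2*c) * (bK * aK * bK⁻¹) * (bK ^ (2*c))⁻¹ := by group
  _ = bK ^ (2*c) * aK⁻¹ * (bK ^ (2*c))⁻¹ := by rw [conj_b]
  _ = (bK ^ (2*c) * aK * (bK ^ (2*c))⁻¹)⁻¹ := by group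
  _ = aK⁻¹ := by rw [conj_even]

def toK : M →* KleinGroup :=
  SemidirectProduct.lift (zpowersHom _ aK) (zpowersHom _ bK) (by
    intro g
    refine MonoidHom.ext fun n => ?_
    simp only [MonoidHom.comp_apply, MulEquiv.coe_toMonoidHom, MulAut.conj_apply,
      zpowersHom_apply]
    rcases Int.even_or_odd (toAdd g) with he | ho
    · rw [show (φK g) n = n by rw [← ofAdd_toAdd g]; exact φK_even he n]
      obtain ⟨c, hc⟩ := he
      have key : bK ^ (toAdd g) * aK ^ (toAdd n) * (bK ^ (toAdd g))⁻¹ = aK ^ (toAdd n) := by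
        rw [← conj_zpow (i := toAdd n) (a := bK ^ toAdd g) (b := aK)]
        rw [hc, show c + c = 2 * c by ring, conj_even]
      rw [key]
    · rw [show (φK g) n = n⁻¹ by rw [← ofAdd_toAdd g]; exact φK_odd ho n]
      obtain ⟨c, hc⟩ := ho
      have key : bK ^ (toAdd g) * aK ^ (toAdd n) * (bK ^ (toAdd g))⁻¹ = aK ^ (-toAdd n) := by
        rw [← conj_zpow (i := toAdd n) (a := bK ^ toAdd g) (b := aK), hc, conj_odd]
        group
      rw [key]
      simp [zpow_neg])

lemma toK_A : toK A = aK := by simp [toK, A, zpowersHom_apply]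
lemma toK_B : toK B = bK := by simp [toK, B, zpowersHom_apply]

lemma toK_toM : toK.comp toM = MonoidHom.id _ := by
  apply PresentedGroup.ext
  intro x
  fin_cases x
  · show toK (toM aK) = aK
    rw [toM_a, toK_A]
  · show toK (toM bK) = bK
    rw [toM_b, toK_B]

lemma toM_toK : toM.comp toK = MonoidHom.id _ := by
  apply SemidirectProduct.hom_ext
  · apply MonoidHom.ext_mint
    show toM (toK (inl (ofAdd 1))) = inl (ofAdd 1)
    rw [show (inl (ofAdd 1) : M) = A from rfl, toK_A, toM_a]
  · apply MonoidHom.ext_mint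
    show toM (toK (inr (ofAdd 1))) = inr (ofAdd 1)
    rw [show (inr (ofAdd 1) : M) = B from rfl, toK_B, toM_b]

def e : KleinGroup ≃* M := MonoidHom.toMulEquiv toM toK toK_toM toM_toK

lemma e_word (p q : ℤ) : e (aK ^ p * bK ^ q) = ⟨ofAdd p, ofAdd q⟩ := by
  show toM (aK ^ p * bK ^ q) = _
  rw [map_mul, map_zpow, map_zpow, toM_a, toM_b, A_zpow, B_zpow, ← mk_eq_inl_mul_inr]

end KleinSolve

open KleinSolve Multiplicative SemidirectProduct in
/-- Every element of the coset `a^(2k)·⟨b⁴⟩` has a unique square root in the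
Klein bottle group, and that square root lies in `a^k·⟨b²⟩`. -/
theorem unique_sqrt_of_coset (k : ℤ) (g : KleinGroup)
    (hg : g ∈ (aK ^ (2 * k)) • ((Subgroup.closure {bK ^ 4} : Subgroup KleinGroup) : Set KleinGroup)) :
    (∃! x : KleinGroup, x ^ 2 = g) ∧
      ∀ x : KleinGroup, x ^ 2 = g →
        x ∈ (aK ^ k) • ((Subgroup.closure {bK ^ 2} : Subgroup KleinGroup) : Set KleinGroup) := by
  obtain ⟨y, hy, rfl⟩ := hg
  rw [SetLike.mem_coe, Subgroup.mem_closure_singleton] at hy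
  obtain ⟨m, rfl⟩ := hy
  beta_reduce
  have hgform : (aK ^ (2*k)) • ((bK ^ (4:ℕ)) ^ m) = aK ^ (2*k) * bK ^ (4*m) := by
    rw [smul_eq_mul, show (bK ^ (4:ℕ)) = bK ^ ((4:ℤ)) from (zpow_natCast bK 4).symm, ← zpow_mul]
  rw [hgform]
  -- commuting facts
  have hcomm : Commute (aK ^ k) (bK ^ (2*m)) := by
    rw [zpow_mul]
    exact (comm2.zpow_zpow m k).symm
  set x₀ : KleinGroup := aK ^ k * bK ^ (2*m) with hx₀def
  have hx₀ : x₀ ^ 2 = aK ^ (2*k) * bK ^ (4*m) := by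
    rw [hx₀def, hcomm.mul_pow]
    rw [← zpow_natCast (aK ^ k) 2, ← zpow_natCast (bK ^ (2*m)) 2, ← zpow_mul, ← zpow_mul]
    norm_num
    rw [show k * 2 = 2 * k by ring, show 2 * m * 2 = 4 * m by ring]
  -- uniqueness
  have huniq : ∀ y : KleinGroup, y ^ 2 = aK ^ (2*k) * bK ^ (4*m) → y = x₀ := by
    intro y hy2
    have hEy : (e y) * (e y) = ⟨ofAdd (2*k), ofAdd (4*m)⟩ := by
      rw [← map_mul, ← sq, hy2, e_word]
    have hright : (e y).right * (e y).right = ofAdd (4*m) := by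
      have := congrArg SemidirectProduct.right hEy
      simpa using this
    have htq : toAdd (e y).right = 2*m := by
      have := congrArg toAdd hright
      rw [toAdd_mul] at this
      simp only [toAdd_ofAdd] at this
      omega
    have htright : (e y).right = ofAdd (2*m) := by
      rw [← htq, ofAdd_toAdd]
    have hleft : (e y).left * φK (e y).right (e y).left = ofAdd (2*k) := by
      have := congrArg SemidirectProduct.left hEy
      simpa using this
    rw [htright, φK_even ⟨m, by ring⟩] at hleft
    have htp : toAdd (e y).left = k := by
      have := congrArg toAdd hleft
      rw [toAdd_mul] at this
      simp only [toAdd_ofAdd] at this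
      omega
    have htleft : (e y).left = ofAdd k := by rw [← htp, ofAdd_toAdd]
    have : e y = e x₀ := by
      rw [hx₀def, e_word, show (e y : M) = ⟨(e y).left, (e y).right⟩ from rfl, htleft, htright]
    exact e.injective this
  refine ⟨⟨x₀, hx₀, huniq⟩, ?_⟩
  intro x hx
  rw [huniq x hx]
  refine ⟨bK ^ (2*m), ?_, by beta_reduce; rw [smul_eq_mul]⟩
  rw [SetLike.mem_coe, Subgroup.mem_closure_singleton]
  exact ⟨m, by rw [show (bK ^ (2:ℕ)) = bK ^ ((2:ℤ)) from (zpow_natCast bK 2).symm, ← zpow_mul]⟩
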